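/- (Theorem on convergence of the atomic parts of the transition probabilities.) For every q > 1 and every ε > 0 there exists a constant α(q,ε) > 0 such that for every s ≥ 0 and every γ ≥ γ₀, P( sup_{i∈𝒥} Σ_{j∈𝒥} |p^{a,(γ)}_{ij}(s) − p̃^{a,(γ)}_{ij}(s)| ≥ (s+1) α(q,ε) (log γ) γ^{−1/2+ε/2} ) = o(γ^{−q}) as γ → ∞. -/

import Mathlib

open scoped BigOperators

noncomputable section

/-- The diagonal part of a matrix. -/
def diagPart {J : Type*} [DecidableEq J] (M : Matrix J J ℝ) : Matrix J J ℝ :=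
  Matrix.of fun i j => if i = j then M i j else 0

/-- The off-diagonal part of a matrix. -/
def offdiagPart {J : Type*} [DecidableEq J] (M : Matrix J J ℝ) : Matrix J J ℝ :=
  M - diagPart M

/-- A matrix is row-substochastic if its entries are nonnegative and every row sum is ≤ 1. -/
def RowSubstochastic {J : Type*} [Fintype J] (M : Matrix J J ℝ) : Prop :=
  (∀ i j, 0 ≤ M i j) ∧ ∀ i, ∑ j, M i j ≤ 1

/-- A matrix is row-stochastic if its entries are nonnegative and every row sum equals 1. -/
def RowStochastic {J : Type*} [Fintype J] (M : Matrix J J ℝ) : Prop :=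
  (∀ i j, 0 ≤ M i j) ∧ ∀ i, ∑ j, M i j = 1

/-- The matrices `Π(k,v)` produced by the recursion from the family `Q(ℓ,w)`:
`Π(0,0) = I`, `Π(k,v) = 0` for `v > k`,
`Π(k,0) = ∑_{k'=0}^{k-1} Π(k-1,k') Qⁿ(k-1,k')` for `k ≥ 1`, and
`Π(k,v) = Π(k-1,v-1) Q^d(k-1,v-1)` for `k ≥ v ≥ 1`. -/
def PiRec {J : Type*} [Fintype J] [DecidableEq J]
    (Q : ℕ → ℕ → Matrix J J ℝ) : ℕ → ℕ → Matrix J J ℝ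
  | 0, v => if v = 0 then 1 else 0
  | (k+1), v =>
      if v = 0 then ∑ k' ∈ Finset.range (k+1), PiRec Q k k' * offdiagPart (Q k k')
      else if v ≤ k + 1 then PiRec Q k (v-1) * diagPart (Q k (v-1)) else 0

/-- `C_k`: `C_0 = 0` and, for `k ≥ 1`,
`C_k = sup { ∑_j |Q_{ij}(ℓ,w) − Q̃_{ij}(ℓ,w)| : 0 ≤ w ≤ ℓ ≤ k−1, i ∈ 𝒥 }`. -/
def Cconst {J : Type*} [Fintype J] (Q Q' : ℕ → ℕ → Matrix J J ℝ) (k : ℕ) : ℝ :=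
  sSup {x : ℝ | ∃ ℓ w, ∃ i : J, w ≤ ℓ ∧ ℓ < k ∧ x = ∑ j, |Q ℓ w i j - Q' ℓ w i j|}

/-- `Poi_λ(k) = e^{−λ} λ^k / k!`. -/
def Poi (lam : ℝ) (k : ℕ) : ℝ := Real.exp (-lam) * lam ^ k / (Nat.factorial k)

/-- `Erl_{k,γ}(x) = γ (γx)^{k−1} e^{−γx} / (k−1)!` (intended for `k ≥ 1`). -/
def Erl (k : ℕ) (γ x : ℝ) : ℝ :=
  γ * (γ * x) ^ (k - 1) * Real.exp (-(γ * x)) / (Nat.factorial (k - 1))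

/-- Atomic part of the approximate transition probabilities:
`p^a_{ij}(s) = 1_{i=j} ∑_{ℓ≥0} Poi_{γs}(ℓ) Π_{ii}(ℓ,ℓ)`. -/
def pAtom {J : Type*} [Fintype J] [DecidableEq J] (γ : ℝ)
    (Pi : ℕ → ℕ → Matrix J J ℝ) (s : ℝ) (i j : J) : ℝ :=
  (if i = j then 1 else 0) * ∑' ℓ : ℕ, Poi (γ * s) ℓ * Pi ℓ ℓ i i

/-- Absolutely continuous part of the approximate transition probabilities:
`p^c_{ij}(s,v) = ∑_{ℓ≥1} ∑_{w=0}^{ℓ−1} Erl_{ℓ−w,γ}(s−v) Poi_{γv}(w) Π_{ij}(ℓ,w)`. -/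
def pCont {J : Type*} [Fintype J] (γ : ℝ)
    (Pi : ℕ → ℕ → Matrix J J ℝ) (s v : ℝ) (i j : J) : ℝ :=
  ∑' ℓ : ℕ, ∑ w ∈ Finset.range ℓ, Erl (ℓ - w) γ (s - v) * Poi (γ * v) w * Pi ℓ w i j



section AuxLemmas
open MeasureTheory ProbabilityTheory Real Set Filter Asymptotics
open scoped ENNReal NNReal
set_option maxHeartbeats 1000000

lemma aux_piRec_diag {J : Type*} [Fintype J] [DecidableEq J]
    (Q : ℕ → ℕ → Matrix J J ℝ) (k : ℕ) (i : J) :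
    PiRec Q k k i i = ∏ m ∈ Finset.range k, Q m m i i := by
  induction k with
  | zero => simp [PiRec, Matrix.one_apply_eq]
  | succ k ih =>
      have h1 : PiRec Q (k+1) (k+1) = PiRec Q k k * diagPart (Q k k) := by
        rw [PiRec]
        simp
      rw [h1, Matrix.mul_apply, Finset.prod_range_succ, ← ih]
      rw [Finset.sum_eq_single i]
      · simp [diagPart]
      · intro b _ hb
        simp [diagPart, hb]
      · intro h; exact absurd (Finset.mem_univ i) h

lemma aux_prod_diff (n : ℕ) (a b : ℕ → ℝ)
    (ha0 : ∀ m, 0 ≤ a m) (ha1 : ∀ m, a m ≤ 1)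
    (hb0 : ∀ m, 0 ≤ b m) (hb1 : ∀ m, b m ≤ 1) :
    |∏ m ∈ Finset.range n, a m - ∏ m ∈ Finset.range n, b m| ≤
      ∑ m ∈ Finset.range n, |a m - b m| := by
  induction n with
  | zero => simp
  | succ n ih =>
      rw [Finset.prod_range_succ, Finset.prod_range_succ, Finset.sum_range_succ]
      have hb : (0:ℝ) ≤ ∏ m ∈ Finset.range n, b m := Finset.prod_nonneg fun m _ => hb0 m
      have hb' : (∏ m ∈ Finset.range n, b m) ≤ 1 :=
        Finset.prod_le_one (fun m _ => hb0 m) (fun m _ => hb1 m)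
      have key : (∏ m ∈ Finset.range n, a m) * a n - (∏ m ∈ Finset.range n, b m) * b n
          = ((∏ m ∈ Finset.range n, a m) - ∏ m ∈ Finset.range n, b m) * a n
            + (∏ m ∈ Finset.range n, b m) * (a n - b n) := by ring
      rw [key]
      refine (abs_add_le _ _).trans ?_
      rw [abs_mul, abs_mul]
      gcongr
      · calc |∏ m ∈ Finset.range n, a m - ∏ m ∈ Finset.range n, b m| * |a n|
            ≤ (∑ m ∈ Finset.range n, |a m - b m|) * 1 := by
              apply mul_le_mul ih (by rw [abs_of_nonneg (ha0 n)]; exact ha1 n) (abs_nonneg _)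
                (Finset.sum_nonneg fun m _ => abs_nonneg _)
          _ = ∑ m ∈ Finset.range n, |a m - b m| := mul_one _
      · rw [abs_of_nonneg hb]
        calc (∏ m ∈ Finset.range n, b m) * |a n - b n| ≤ 1 * |a n - b n| :=
              mul_le_mul_of_nonneg_right hb' (abs_nonneg _)
          _ = |a n - b n| := one_mul _

lemma aux_exp_tsum (x : ℝ) : ∑' n : ℕ, x ^ n / (Nat.factorial n) = Real.exp x := by
  rw [Real.exp_eq_exp_ℝ, NormedSpace.exp_eq_tsum_div]

lemma aux_summable_poi_mul (lam c : ℝ) :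
    Summable (fun k : ℕ => Poi lam k * c ^ k) := by
  have : ∀ k : ℕ, Poi lam k * c ^ k = Real.exp (-lam) * ((lam * c) ^ k / Nat.factorial k) := by
    intro k
    simp only [Poi, mul_pow]
    ring
  simp only [this]
  exact (Real.summable_pow_div_factorial (lam * c)).mul_left _

lemma aux_summable_poi (lam : ℝ) : Summable (fun k : ℕ => Poi lam k) := by
  simpa using aux_summable_poi_mul lam 1

lemma aux_poi_nonneg {lam : ℝ} (h : 0 ≤ lam) (k : ℕ) : 0 ≤ Poi lam k := by
  unfold Poi; positivity

lemma aux_tsum_poi (lam : ℝ) : ∑' k : ℕ, Poi lam k = Real.exp (-lam) * Real.exp lam := by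
  unfold Poi
  simp only [mul_div_assoc]
  rw [tsum_mul_left, aux_exp_tsum]

lemma aux_tsum_poi_exp (lam : ℝ) :
    ∑' k : ℕ, Poi lam k * Real.exp 1 ^ k = Real.exp (-lam) * Real.exp (lam * Real.exp 1) := by
  have : ∀ k : ℕ, Poi lam k * Real.exp 1 ^ k
      = Real.exp (-lam) * ((lam * Real.exp 1) ^ k / Nat.factorial k) := by
    intro k; simp only [Poi, mul_pow]; ring
  simp only [this]
  rw [tsum_mul_left, aux_exp_tsum]

lemma aux_tsum_poi_one {lam : ℝ} : ∑' k : ℕ, Poi lam k = 1 := by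
  rw [aux_tsum_poi, ← Real.exp_add]; simp

/-- Master bound: `|∑' ℓ, Poi lam ℓ * c ℓ| ≤ u + 2 exp((e-1)lam - M)`. -/
lemma aux_tsum_poi_bound (lam : ℝ) (hlam : 0 ≤ lam) (M : ℕ) (c : ℕ → ℝ) (u : ℝ)
    (hu : 0 ≤ u) (h1 : ∀ ℓ, |c ℓ| ≤ 2) (h2 : ∀ ℓ < M, |c ℓ| ≤ u)
    (hsum : Summable (fun ℓ : ℕ => Poi lam ℓ * c ℓ)) :
    |∑' ℓ : ℕ, Poi lam ℓ * c ℓ| ≤ u + 2 * Real.exp ((Real.exp 1 - 1) * lam - M) := by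
  have hPn : ∀ k, 0 ≤ Poi lam k := aux_poi_nonneg hlam
  have habs : ∀ ℓ, |Poi lam ℓ * c ℓ| = Poi lam ℓ * |c ℓ| := by
    intro ℓ; rw [abs_mul, abs_of_nonneg (hPn ℓ)]
  have hsabs : Summable (fun ℓ : ℕ => |Poi lam ℓ * c ℓ|) := by
    have hb : Summable (fun ℓ : ℕ => Poi lam ℓ * 2) := (aux_summable_poi lam).mul_right 2
    refine Summable.of_nonneg_of_le (fun ℓ => abs_nonneg _) (fun ℓ => ?_) hb
    rw [habs]; exact mul_le_mul_of_nonneg_left (h1 ℓ) (hPn ℓ)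
  have h0 : |∑' ℓ : ℕ, Poi lam ℓ * c ℓ| ≤ ∑' ℓ : ℕ, |Poi lam ℓ * c ℓ| := by
    have heq : (fun ℓ : ℕ => ‖Poi lam ℓ * c ℓ‖) = fun ℓ : ℕ => |Poi lam ℓ * c ℓ| := by
      funext ℓ; rw [Real.norm_eq_abs]
    have := norm_tsum_le_tsum_norm (f := fun ℓ : ℕ => Poi lam ℓ * c ℓ) (heq ▸ hsabs)
    rw [Real.norm_eq_abs] at this
    calc |∑' ℓ : ℕ, Poi lam ℓ * c ℓ| ≤ ∑' ℓ : ℕ, ‖Poi lam ℓ * c ℓ‖ := this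
      _ = ∑' ℓ : ℕ, |Poi lam ℓ * c ℓ| := by rw [heq]
  refine h0.trans ?_
  rw [← Summable.sum_add_tsum_nat_add (f := fun ℓ => |Poi lam ℓ * c ℓ|) M hsabs]
  have hfirst : ∑ ℓ ∈ Finset.range M, |Poi lam ℓ * c ℓ| ≤ u := by
    calc ∑ ℓ ∈ Finset.range M, |Poi lam ℓ * c ℓ|
        ≤ ∑ ℓ ∈ Finset.range M, Poi lam ℓ * u := by
          apply Finset.sum_le_sum
          intro ℓ hℓ
          rw [habs]
          exact mul_le_mul_of_nonneg_left (h2 ℓ (Finset.mem_range.mp hℓ)) (hPn ℓ)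
      _ = (∑ ℓ ∈ Finset.range M, Poi lam ℓ) * u := by rw [← Finset.sum_mul]
      _ ≤ 1 * u := by
          apply mul_le_mul_of_nonneg_right _ hu
          rw [← aux_tsum_poi_one (lam := lam)]
          exact Summable.sum_le_tsum _ (fun k _ => hPn k) (aux_summable_poi lam)
      _ = u := one_mul u
  have hsecond : ∑' ℓ : ℕ, |Poi lam (ℓ + M) * c (ℓ + M)|
      ≤ 2 * Real.exp ((Real.exp 1 - 1) * lam - M) := by
    have hg : Summable (fun k : ℕ => Poi lam k * Real.exp 1 ^ k) :=
      aux_summable_poi_mul lam (Real.exp 1)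
    have hgn : ∀ k, 0 ≤ Poi lam k * Real.exp 1 ^ k := fun k =>
      mul_nonneg (hPn k) (pow_nonneg (Real.exp_pos 1).le k)
    have hpt : ∀ ℓ : ℕ, |Poi lam (ℓ + M) * c (ℓ + M)|
        ≤ (2 * Real.exp (-(M:ℝ))) * (Poi lam (ℓ + M) * Real.exp 1 ^ (ℓ + M)) := by
      intro ℓ
      rw [habs]
      have h1' : |c (ℓ + M)| ≤ 2 := h1 _
      have he : Real.exp 1 ^ (ℓ + M) = Real.exp (ℓ + M) := by
        rw [← Real.exp_one_rpow ((ℓ:ℝ) + M)]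
        rw [← Real.rpow_natCast (Real.exp 1) (ℓ + M)]
        norm_num
      have key : (2 * Real.exp (-(M:ℝ))) * (Poi lam (ℓ + M) * Real.exp 1 ^ (ℓ + M))
          = Poi lam (ℓ + M) * (2 * Real.exp (ℓ:ℝ)) := by
        rw [he]
        rw [show 2 * Real.exp (-(M:ℝ)) * (Poi lam (ℓ + M) * Real.exp ((ℓ:ℝ) + M))
            = Poi lam (ℓ + M) * (2 * (Real.exp (-(M:ℝ)) * Real.exp ((ℓ:ℝ) + M))) by ring,
          ← Real.exp_add, show -(M:ℝ) + ((ℓ:ℝ) + M) = (ℓ:ℝ) by ring]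
      rw [key]
      have h2e : (2:ℝ) ≤ 2 * Real.exp (ℓ:ℝ) := by
        nlinarith [Real.one_le_exp (Nat.cast_nonneg ℓ : (0:ℝ) ≤ ℓ)]
      calc Poi lam (ℓ + M) * |c (ℓ + M)| ≤ Poi lam (ℓ + M) * 2 :=
            mul_le_mul_of_nonneg_left h1' (hPn _)
        _ ≤ Poi lam (ℓ + M) * (2 * Real.exp (ℓ:ℝ)) :=
            mul_le_mul_of_nonneg_left h2e (hPn _)
    have hsum2 : Summable (fun ℓ : ℕ => (2 * Real.exp (-(M:ℝ)))
        * (Poi lam (ℓ + M) * Real.exp 1 ^ (ℓ + M))) := by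
      apply Summable.mul_left
      exact ((summable_nat_add_iff M).mpr hg)
    calc ∑' ℓ : ℕ, |Poi lam (ℓ + M) * c (ℓ + M)|
        ≤ ∑' ℓ : ℕ, (2 * Real.exp (-(M:ℝ))) * (Poi lam (ℓ + M) * Real.exp 1 ^ (ℓ + M)) := by
          apply Summable.tsum_le_tsum hpt _ hsum2
          exact (summable_nat_add_iff (f := fun ℓ => |Poi lam ℓ * c ℓ|) M).mpr hsabs
      _ = (2 * Real.exp (-(M:ℝ))) * ∑' ℓ : ℕ, Poi lam (ℓ + M) * Real.exp 1 ^ (ℓ + M) :=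
          tsum_mul_left
      _ ≤ (2 * Real.exp (-(M:ℝ))) * ∑' k : ℕ, Poi lam k * Real.exp 1 ^ k := by
          apply mul_le_mul_of_nonneg_left _ (by positivity)
          have := Summable.sum_add_tsum_nat_add (f := fun k => Poi lam k * Real.exp 1 ^ k) M hg
          have hpartial : 0 ≤ ∑ k ∈ Finset.range M, Poi lam k * Real.exp 1 ^ k :=
            Finset.sum_nonneg fun k _ => hgn k
          linarith
      _ = 2 * Real.exp ((Real.exp 1 - 1) * lam - M) := by
          rw [aux_tsum_poi_exp]
          rw [show 2 * Real.exp (-(M:ℝ)) * (Real.exp (-lam) * Real.exp (lam * Real.exp 1))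
            = 2 * (Real.exp (-(M:ℝ)) * (Real.exp (-lam) * Real.exp (lam * Real.exp 1))) by ring,
            ← Real.exp_add, ← Real.exp_add]
          congr 1
          ring
  calc ∑ ℓ ∈ Finset.range M, |Poi lam ℓ * c ℓ| + ∑' ℓ : ℕ, |Poi lam (ℓ + M) * c (ℓ + M)|
      ≤ u + 2 * Real.exp ((Real.exp 1 - 1) * lam - M) := add_le_add hfirst hsecond

lemma aux_expPDFReal_eq (x : ℝ) :
    exponentialPDFReal 1 x = if 0 ≤ x then Real.exp (-x) else 0 := by
  unfold exponentialPDFReal gammaPDFReal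
  split_ifs with h
  · simp [Real.Gamma_one, Real.rpow_zero]
  · rfl

lemma aux_integral_expMeasure (g : ℝ → ℝ) :
    ∫ x, g x ∂(expMeasure 1) = ∫ x, (Ici (0:ℝ)).indicator (fun x => Real.exp (-x) * g x) x := by
  have h1 : expMeasure 1 =
      volume.withDensity (fun x => ((exponentialPDFReal 1 x).toNNReal : ℝ≥0∞)) := by
    rfl
  rw [h1, integral_withDensity_eq_integral_smul
    ((measurable_exponentialPDFReal 1).real_toNNReal) g]
  congr 1
  funext x
  rw [NNReal.smul_def, smul_eq_mul, Real.coe_toNNReal _ (exponentialPDFReal_nonneg one_pos x),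
    aux_expPDFReal_eq]
  by_cases h : 0 ≤ x
  · rw [if_pos h, Set.indicator_of_mem (mem_Ici.mpr h)]
  · rw [if_neg h, Set.indicator_of_notMem (by simpa using h), zero_mul]

lemma aux_integrable_exp_expMeasure {c : ℝ} (hc : c < 1) :
    Integrable (fun x => Real.exp (c * x)) (expMeasure 1) := by
  have h1 : expMeasure 1 =
      volume.withDensity (fun x => (exponentialPDF 1 x)) := rfl
  have hmeas : Measurable (fun x => exponentialPDF 1 x) :=
    (measurable_exponentialPDFReal 1).ennreal_ofReal
  rw [h1, integrable_withDensity_iff hmeas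
    (Eventually.of_forall fun x => (by exact ENNReal.ofReal_lt_top : exponentialPDF 1 x < ⊤))]
  have heq : (fun x : ℝ => Real.exp (c * x) * (exponentialPDF 1 x).toReal)
      = (Ici (0:ℝ)).indicator (fun x => Real.exp (-((1 - c) * x))) := by
    funext x
    rw [exponentialPDF, ENNReal.toReal_ofReal (exponentialPDFReal_nonneg one_pos x),
      aux_expPDFReal_eq]
    by_cases h : 0 ≤ x
    · rw [if_pos h, Set.indicator_of_mem (mem_Ici.mpr h), ← Real.exp_add]
      congr 1; ring
    · rw [if_neg h, Set.indicator_of_notMem (by simpa using h), mul_zero]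
  rw [heq, integrable_indicator_iff measurableSet_Ici, integrableOn_Ici_iff_integrableOn_Ioi]
  have hI := exp_neg_integrableOn_Ioi 0 (by linarith : (0:ℝ) < 1 - c)
  simp only [neg_mul] at hI
  exact hI

lemma aux_integral_exp_expMeasure {c : ℝ} (hc : c < 1) :
    ∫ x, Real.exp (c * x) ∂(expMeasure 1) = (1 - c)⁻¹ := by
  have hb : (0:ℝ) < 1 - c := by linarith
  rw [aux_integral_expMeasure, integral_indicator measurableSet_Ici]
  have hfe : ∀ x : ℝ, Real.exp (-x) * Real.exp (c * x) = Real.exp (-((1 - c) * x)) := by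
    intro x; rw [← Real.exp_add]; congr 1; ring
  simp only [hfe]
  rw [integral_Ici_eq_integral_Ioi]
  have := integral_comp_mul_left_Ioi (fun y => Real.exp (-y)) 0 hb
  simp only [mul_zero, smul_eq_mul] at this
  rw [this, integral_exp_neg_Ioi]
  simp

lemma aux_mgf_integrable {Ω : Type*} [MeasurableSpace Ω] (P : Measure Ω)
    (X : Ω → ℝ) (hX : Measurable X) (hmap : P.map X = expMeasure 1) {c : ℝ} (hc : c < 1) :
    Integrable (fun ω => Real.exp (c * X ω)) P := by
  have hInt : Integrable (fun x => Real.exp (c * x)) (P.map X) :=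
    hmap ▸ aux_integrable_exp_expMeasure hc
  have hcont : Continuous (fun x : ℝ => Real.exp (c * x)) := by continuity
  rwa [integrable_map_measure hcont.aestronglyMeasurable hX.aemeasurable] at hInt

lemma aux_mgf_exponential {Ω : Type*} [MeasurableSpace Ω] (P : Measure Ω)
    (X : Ω → ℝ) (hX : Measurable X) (hmap : P.map X = expMeasure 1) {c : ℝ} (hc : c < 1) :
    mgf X P c = (1 - c)⁻¹ := by
  have hcont : Continuous (fun x : ℝ => Real.exp (c * x)) := by continuity
  rw [mgf]
  calc ∫ ω, Real.exp (c * X ω) ∂P = ∫ x, Real.exp (c * x) ∂(P.map X) :=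
        (integral_map hX.aemeasurable hcont.aestronglyMeasurable).symm
    _ = (1 - c)⁻¹ := by rw [hmap]; exact aux_integral_exp_expMeasure hc

lemma aux_ineq1 {θ : ℝ} (h0 : 0 ≤ θ) (h5 : θ ≤ 1/5) :
    Real.exp (-(θ + 2*θ^2)) ≤ 1 - θ := by
  have hx : |(-(θ + 2*θ^2))| ≤ 1 := by rw [abs_neg, abs_of_nonneg (by positivity)]; nlinarith
  have := Real.abs_exp_sub_one_sub_id_le hx
  have h1 := abs_le.mp this
  have hsq : (-(θ + 2*θ^2))^2 = (θ + 2*θ^2)^2 := by ring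
  have hkey : (θ + 2*θ^2)^2 ≤ 2*θ^2 := by nlinarith [sq_nonneg θ, mul_nonneg (mul_nonneg h0 h0) h0]
  rw [hsq] at h1
  linarith [h1.2, hkey]

lemma aux_ineq2 {θ : ℝ} (h0 : 0 ≤ θ) (h5 : θ ≤ 1/5) :
    Real.exp (θ - 2*θ^2) ≤ 1 + θ := by
  have hx : |θ - 2*θ^2| ≤ 1 := by rw [abs_of_nonneg (by nlinarith)]; nlinarith
  have := Real.abs_exp_sub_one_sub_id_le hx
  have h1 := abs_le.mp this
  have hkey : (θ - 2*θ^2)^2 ≤ 2*θ^2 := by nlinarith [sq_nonneg θ, mul_nonneg (mul_nonneg h0 h0) h0]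
  linarith [h1.2, hkey]

lemma aux_chernoff {Ω : Type*} [MeasurableSpace Ω] (P : Measure Ω) [IsProbabilityMeasure P]
    (E : ℕ → Ω → ℝ) (hEmeas : ∀ i, Measurable (E i))
    (hEindep : iIndepFun E P)
    (hEexp : ∀ i, P.map (E i) = expMeasure 1)
    (m : ℕ) (θ t : ℝ) (hθ0 : 0 < θ) (hθ5 : θ ≤ 1/5) (ht : 0 ≤ t) :
    (P {ω | t ≤ |(∑ i ∈ Finset.range m, E i ω) - m|}).toReal
      ≤ 2 * Real.exp (2*θ^2*m - θ*t) := by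
  have hθ1 : θ < 1 := lt_of_le_of_lt hθ5 (by norm_num)
  have hθ1' : -θ < 1 := by linarith
  set X : Ω → ℝ := ∑ i ∈ Finset.range m, E i with hX
  have hXapp : ∀ ω, X ω = ∑ i ∈ Finset.range m, E i ω := by
    intro ω; rw [hX]; exact Finset.sum_apply ω (Finset.range m) E
  have hintp : Integrable (fun ω => Real.exp (θ * X ω)) P := by
    rw [hX]
    exact iIndepFun.integrable_exp_mul_sum hEindep hEmeas
      (fun i _ => aux_mgf_integrable P (E i) (hEmeas i) (hEexp i) hθ1)
  have hintm : Integrable (fun ω => Real.exp ((-θ) * X ω)) P := by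
    rw [hX]
    exact iIndepFun.integrable_exp_mul_sum hEindep hEmeas
      (fun i _ => aux_mgf_integrable P (E i) (hEmeas i) (hEexp i) hθ1')
  have hmgfp : mgf X P θ = ((1 - θ)⁻¹) ^ m := by
    rw [hX, iIndepFun.mgf_sum hEindep hEmeas (Finset.range m)]
    rw [Finset.prod_congr rfl (fun i _ => aux_mgf_exponential P (E i) (hEmeas i) (hEexp i) hθ1)]
    rw [Finset.prod_const, Finset.card_range]
  have hmgfm : mgf X P (-θ) = ((1 + θ)⁻¹) ^ m := by
    rw [hX, iIndepFun.mgf_sum hEindep hEmeas (Finset.range m)]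
    rw [Finset.prod_congr rfl (fun i _ => aux_mgf_exponential P (E i) (hEmeas i) (hEexp i) hθ1')]
    rw [Finset.prod_const, Finset.card_range]
    norm_num
  have hup := measure_ge_le_exp_mul_mgf (X := X) (μ := P) ((m:ℝ) + t) hθ0.le hintp
  have hlow := measure_le_le_exp_mul_mgf (X := X) (μ := P) ((m:ℝ) - t)
    (neg_nonpos.mpr hθ0.le) hintm
  rw [hmgfp] at hup
  rw [hmgfm] at hlow
  -- numeric bounds
  have hbp : Real.exp (-θ * ((m:ℝ) + t)) * ((1 - θ)⁻¹) ^ m ≤ Real.exp (2*θ^2*m - θ*t) := by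
    have h1θ : (0:ℝ) < 1 - θ := by linarith
    have hfac : (1 - θ)⁻¹ ≤ Real.exp (θ + 2*θ^2) := by
      rw [inv_le_comm₀ h1θ (Real.exp_pos _), ← Real.exp_neg]
      exact aux_ineq1 hθ0.le hθ5
    calc Real.exp (-θ * ((m:ℝ) + t)) * ((1 - θ)⁻¹) ^ m
        ≤ Real.exp (-θ * ((m:ℝ) + t)) * (Real.exp (θ + 2*θ^2)) ^ m := by
          apply mul_le_mul_of_nonneg_left _ (Real.exp_pos _).le
          exact pow_le_pow_left₀ (inv_nonneg.mpr h1θ.le) hfac m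
      _ = Real.exp (2*θ^2*m - θ*t) := by
          rw [← Real.exp_nat_mul, ← Real.exp_add]
          congr 1; ring
  have hbm : Real.exp (-(-θ) * ((m:ℝ) - t)) * ((1 + θ)⁻¹) ^ m ≤ Real.exp (2*θ^2*m - θ*t) := by
    have h1θ : (0:ℝ) < 1 + θ := by linarith
    have hfac : (1 + θ)⁻¹ ≤ Real.exp (-θ + 2*θ^2) := by
      rw [inv_le_comm₀ h1θ (Real.exp_pos _), ← Real.exp_neg]
      have : -(-θ + 2*θ^2) = θ - 2*θ^2 := by ring
      rw [this]
      exact aux_ineq2 hθ0.le hθ5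
    calc Real.exp (-(-θ) * ((m:ℝ) - t)) * ((1 + θ)⁻¹) ^ m
        ≤ Real.exp (θ * ((m:ℝ) - t)) * (Real.exp (-θ + 2*θ^2)) ^ m := by
          rw [neg_neg]
          apply mul_le_mul_of_nonneg_left _ (Real.exp_pos _).le
          exact pow_le_pow_left₀ (inv_nonneg.mpr h1θ.le) hfac m
      _ = Real.exp (2*θ^2*m - θ*t) := by
          rw [← Real.exp_nat_mul, ← Real.exp_add]
          congr 1; ring
  -- set inclusion
  have hincl : {ω | t ≤ |(∑ i ∈ Finset.range m, E i ω) - m|}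
      ⊆ {ω | (m:ℝ) + t ≤ X ω} ∪ {ω | X ω ≤ (m:ℝ) - t} := by
    intro ω hω
    simp only [Set.mem_setOf_eq] at hω
    rcases le_abs.mp hω with h | h
    · left; simp only [Set.mem_setOf_eq, hXapp]; linarith
    · right; simp only [Set.mem_setOf_eq, hXapp]; linarith
  have hne : P {ω | (m:ℝ) + t ≤ X ω} + P {ω | X ω ≤ (m:ℝ) - t} ≠ ⊤ :=
    ENNReal.add_ne_top.mpr ⟨measure_ne_top _ _, measure_ne_top _ _⟩
  calc (P {ω | t ≤ |(∑ i ∈ Finset.range m, E i ω) - m|}).toReal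
      ≤ (P {ω | (m:ℝ) + t ≤ X ω} + P {ω | X ω ≤ (m:ℝ) - t}).toReal :=
        ENNReal.toReal_mono hne ((measure_mono hincl).trans (measure_union_le _ _))
    _ ≤ (P {ω | (m:ℝ) + t ≤ X ω}).toReal + (P {ω | X ω ≤ (m:ℝ) - t}).toReal :=
        ENNReal.toReal_add_le
    _ ≤ Real.exp (2*θ^2*m - θ*t) + Real.exp (2*θ^2*m - θ*t) :=
        add_le_add (hup.trans hbp) (hlow.trans hbm)
    _ = 2 * Real.exp (2*θ^2*m - θ*t) := by ring

lemma aux_core {J : Type*} [Fintype J] [DecidableEq J]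
    (Λ : ℝ → ℝ → Matrix J J ℝ) (K : ℝ) (hK : 0 ≤ K)
    (hLip : ∀ s₁ s₂ v₁ v₂ : ℝ, 0 ≤ s₁ → 0 ≤ s₂ → 0 ≤ v₁ → 0 ≤ v₂ →
      ∀ i : J, ∑ j, |Λ s₁ v₁ i j - Λ s₂ v₂ i j| ≤ K * (|s₁ - s₂| + |v₁ - v₂|))
    (γ₀ : ℝ) (hγ₀ : 0 < γ₀)
    (hoffdiag : ∀ s v : ℝ, 0 ≤ s → 0 ≤ v → ∀ i j : J, i ≠ j → 0 ≤ Λ s v i j)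
    (hrowzero : ∀ s v : ℝ, 0 ≤ s → 0 ≤ v → ∀ i : J, ∑ j, Λ s v i j = 0)
    (hdiagbdd : ∀ s v : ℝ, 0 ≤ s → 0 ≤ v → ∀ i : J, |Λ s v i i| ≤ γ₀)
    (γ s : ℝ) (hγ : γ₀ ≤ γ) (hs : 0 ≤ s)
    (M : ℕ) (tt : ℝ) (htt : 0 ≤ tt)
    (Ev : ℕ → ℝ) (hEv : ∀ i, 0 ≤ Ev i)
    (hgood : ∀ m : ℕ, 1 ≤ m → m ≤ M → |(∑ i ∈ Finset.range m, Ev i) - (m:ℝ)| < tt)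
    (i : J) :
    |pAtom γ (PiRec (fun ℓ w => 1 + γ⁻¹ •
        Λ ((∑ i' ∈ Finset.range (ℓ+1), Ev i') / γ)
          ((∑ i' ∈ Finset.range (ℓ+1), Ev i') / γ -
            (∑ i' ∈ Finset.range (ℓ-w), Ev i') / γ))) s i i -
      pAtom γ (PiRec (fun ℓ w => 1 + γ⁻¹ • Λ (((ℓ:ℝ)+1)/γ) (((w:ℝ)+1)/γ))) s i i|
      ≤ 2*K*(M:ℝ)*tt/γ^2 + 2 * Real.exp ((Real.exp 1 - 1) * (γ*s) - M) := by
  have hγpos : 0 < γ := lt_of_lt_of_le hγ₀ hγ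
  set χ : ℕ → ℝ := fun m => (∑ i' ∈ Finset.range (m+1), Ev i') / γ with hχ
  have hχnn : ∀ m, 0 ≤ χ m := fun m =>
    div_nonneg (Finset.sum_nonneg fun i' _ => hEv i') hγpos.le
  -- entries are in [0,1]
  have hentry : ∀ x : ℝ, 0 ≤ x →
      0 ≤ 1 + γ⁻¹ * Λ x x i i ∧ 1 + γ⁻¹ * Λ x x i i ≤ 1 := by
    intro x hx
    have hrow := hrowzero x x hx hx i
    have hsplit : Λ x x i i + ∑ j ∈ Finset.univ.erase i, Λ x x i j = 0 := by
      rw [Finset.add_sum_erase _ _ (Finset.mem_univ i)]; exact hrow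
    have herasenn : 0 ≤ ∑ j ∈ Finset.univ.erase i, Λ x x i j :=
      Finset.sum_nonneg fun j hj =>
        hoffdiag x x hx hx i j (Ne.symm (Finset.ne_of_mem_erase hj))
    have hneg : Λ x x i i ≤ 0 := by linarith
    have hlb : -γ₀ ≤ Λ x x i i := (abs_le.mp (hdiagbdd x x hx hx i)).1
    constructor
    · have hmul : γ⁻¹ * (-γ) ≤ γ⁻¹ * Λ x x i i :=
        mul_le_mul_of_nonneg_left (by linarith) (inv_nonneg.mpr hγpos.le)
      have heq : γ⁻¹ * (-γ) = -1 := by field_simp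
      linarith
    · have hmul : γ⁻¹ * Λ x x i i ≤ 0 :=
        mul_nonpos_of_nonneg_of_nonpos (inv_nonneg.mpr hγpos.le) hneg
      linarith
  set a : ℕ → ℝ := fun m => 1 + γ⁻¹ * Λ (χ m) (χ m) i i with ha
  set b : ℕ → ℝ := fun m => 1 + γ⁻¹ * Λ (((m:ℝ)+1)/γ) (((m:ℝ)+1)/γ) i i with hb
  have hbnn : ∀ m : ℕ, (0:ℝ) ≤ ((m:ℝ)+1)/γ := fun m => by positivity
  have ha0 : ∀ m, 0 ≤ a m := fun m => (hentry (χ m) (hχnn m)).1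
  have ha1 : ∀ m, a m ≤ 1 := fun m => (hentry (χ m) (hχnn m)).2
  have hb0 : ∀ m, 0 ≤ b m := fun m => (hentry _ (hbnn m)).1
  have hb1 : ∀ m, b m ≤ 1 := fun m => (hentry _ (hbnn m)).2
  -- identify the diagonal products
  have hPiR : ∀ ℓ : ℕ, (PiRec (fun ℓ w => 1 + γ⁻¹ •
      Λ ((∑ i' ∈ Finset.range (ℓ+1), Ev i') / γ)
        ((∑ i' ∈ Finset.range (ℓ+1), Ev i') / γ -
          (∑ i' ∈ Finset.range (ℓ-w), Ev i') / γ))) ℓ ℓ i i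
      = ∏ m ∈ Finset.range ℓ, a m := by
    intro ℓ
    rw [aux_piRec_diag]
    apply Finset.prod_congr rfl
    intro m _
    simp only [Nat.sub_self, Finset.range_zero, Finset.sum_empty, zero_div, sub_zero,
      Matrix.add_apply, Matrix.one_apply_eq, Matrix.smul_apply, smul_eq_mul, ha]
    rfl
  have hPiD : ∀ ℓ : ℕ, (PiRec (fun ℓ w : ℕ => 1 + γ⁻¹ •
      Λ (((ℓ:ℝ)+1)/γ) (((w:ℝ)+1)/γ))) ℓ ℓ i i = ∏ m ∈ Finset.range ℓ, b m := by
    intro ℓ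
    rw [aux_piRec_diag]
    apply Finset.prod_congr rfl
    intro m _
    simp only [Matrix.add_apply, Matrix.one_apply_eq, Matrix.smul_apply, smul_eq_mul, hb]
  set A : ℕ → ℝ := fun ℓ => ∏ m ∈ Finset.range ℓ, a m with hA
  set B : ℕ → ℝ := fun ℓ => ∏ m ∈ Finset.range ℓ, b m with hB
  have hAmem : ∀ ℓ, 0 ≤ A ℓ ∧ A ℓ ≤ 1 := fun ℓ =>
    ⟨Finset.prod_nonneg fun m _ => ha0 m, Finset.prod_le_one (fun m _ => ha0 m) fun m _ => ha1 m⟩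
  have hBmem : ∀ ℓ, 0 ≤ B ℓ ∧ B ℓ ≤ 1 := fun ℓ =>
    ⟨Finset.prod_nonneg fun m _ => hb0 m, Finset.prod_le_one (fun m _ => hb0 m) fun m _ => hb1 m⟩
  -- factor differences
  have hab : ∀ m : ℕ, m + 1 ≤ M → |a m - b m| ≤ 2*K*tt/γ^2 := by
    intro m hm
    have hdiff : a m - b m = γ⁻¹ * (Λ (χ m) (χ m) i i - Λ (((m:ℝ)+1)/γ) (((m:ℝ)+1)/γ) i i) := by
      simp only [ha, hb]; ring
    have hLip1 : |Λ (χ m) (χ m) i i - Λ (((m:ℝ)+1)/γ) (((m:ℝ)+1)/γ) i i|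
        ≤ K * (|χ m - ((m:ℝ)+1)/γ| + |χ m - ((m:ℝ)+1)/γ|) := by
      have hsum := hLip (χ m) (((m:ℝ)+1)/γ) (χ m) (((m:ℝ)+1)/γ)
        (hχnn m) (hbnn m) (hχnn m) (hbnn m) i
      refine le_trans ?_ hsum
      exact Finset.single_le_sum (f := fun j => |Λ (χ m) (χ m) i j -
        Λ (((m:ℝ)+1)/γ) (((m:ℝ)+1)/γ) i j|) (fun j _ => abs_nonneg _) (Finset.mem_univ i)
    have hχdiff : |χ m - ((m:ℝ)+1)/γ| ≤ tt / γ := by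
      have h1 := hgood (m+1) (Nat.le_add_left 1 m) hm
      have h2 : χ m - ((m:ℝ)+1)/γ
          = ((∑ i' ∈ Finset.range (m+1), Ev i') - ((m:ℝ)+1)) / γ := by
        rw [hχ]; ring
      rw [h2, abs_div, abs_of_pos hγpos]
      gcongr
      push_cast at h1
      exact h1.le
    calc |a m - b m| = γ⁻¹ * |Λ (χ m) (χ m) i i - Λ (((m:ℝ)+1)/γ) (((m:ℝ)+1)/γ) i i| := by
          rw [hdiff, abs_mul, abs_of_nonneg (inv_nonneg.mpr hγpos.le)]
      _ ≤ γ⁻¹ * (K * (tt/γ + tt/γ)) := by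
          apply mul_le_mul_of_nonneg_left _ (inv_nonneg.mpr hγpos.le)
          refine hLip1.trans ?_
          apply mul_le_mul_of_nonneg_left _ hK
          exact add_le_add hχdiff hχdiff
      _ = 2*K*tt/γ^2 := by field_simp; ring
  -- bounds on |A - B|
  have hABbdd : ∀ ℓ, |A ℓ - B ℓ| ≤ 2 := by
    intro ℓ
    have h1 := hAmem ℓ; have h2 := hBmem ℓ
    rw [abs_sub_le_iff]
    constructor <;> nlinarith [h1.1, h1.2, h2.1, h2.2]
  have hABsmall : ∀ ℓ < M, |A ℓ - B ℓ| ≤ 2*K*(M:ℝ)*tt/γ^2 := by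
    intro ℓ hℓ
    calc |A ℓ - B ℓ| ≤ ∑ m ∈ Finset.range ℓ, |a m - b m| :=
          aux_prod_diff ℓ a b ha0 ha1 hb0 hb1
      _ ≤ ∑ m ∈ Finset.range ℓ, 2*K*tt/γ^2 := by
          apply Finset.sum_le_sum
          intro m hm
          exact hab m (Nat.succ_le_of_lt (lt_of_lt_of_le (Finset.mem_range.mp hm)
            (le_of_lt hℓ)))
      _ = (ℓ:ℝ) * (2*K*tt/γ^2) := by rw [Finset.sum_const, Finset.card_range]; simp
      _ ≤ (M:ℝ) * (2*K*tt/γ^2) := by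
          apply mul_le_mul_of_nonneg_right _ (by positivity)
          exact_mod_cast hℓ.le
      _ = 2*K*(M:ℝ)*tt/γ^2 := by ring
  -- summability and rewriting of the pAtom difference
  have hlam : 0 ≤ γ * s := mul_nonneg hγpos.le hs
  have hsumA : Summable (fun ℓ : ℕ => Poi (γ*s) ℓ * A ℓ) := by
    apply Summable.of_abs
    apply Summable.of_nonneg_of_le (fun ℓ => abs_nonneg _) (fun ℓ => ?_) (aux_summable_poi (γ*s))
    rw [abs_mul, abs_of_nonneg (aux_poi_nonneg hlam ℓ), abs_of_nonneg (hAmem ℓ).1]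
    exact mul_le_mul_of_nonneg_left (hAmem ℓ).2 (aux_poi_nonneg hlam ℓ) |>.trans (le_of_eq (mul_one _))
  have hsumB : Summable (fun ℓ : ℕ => Poi (γ*s) ℓ * B ℓ) := by
    apply Summable.of_abs
    apply Summable.of_nonneg_of_le (fun ℓ => abs_nonneg _) (fun ℓ => ?_) (aux_summable_poi (γ*s))
    rw [abs_mul, abs_of_nonneg (aux_poi_nonneg hlam ℓ), abs_of_nonneg (hBmem ℓ).1]
    exact mul_le_mul_of_nonneg_left (hBmem ℓ).2 (aux_poi_nonneg hlam ℓ) |>.trans (le_of_eq (mul_one _))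
  have hre : pAtom γ (PiRec (fun ℓ w => 1 + γ⁻¹ •
        Λ ((∑ i' ∈ Finset.range (ℓ+1), Ev i') / γ)
          ((∑ i' ∈ Finset.range (ℓ+1), Ev i') / γ -
            (∑ i' ∈ Finset.range (ℓ-w), Ev i') / γ))) s i i -
      pAtom γ (PiRec (fun ℓ w => 1 + γ⁻¹ • Λ (((ℓ:ℝ)+1)/γ) (((w:ℝ)+1)/γ))) s i i
      = ∑' ℓ : ℕ, Poi (γ*s) ℓ * (A ℓ - B ℓ) := by
    unfold pAtom
    rw [if_pos rfl, one_mul, one_mul]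
    have e1 : (∑' ℓ : ℕ, Poi (γ*s) ℓ * (PiRec (fun ℓ w => 1 + γ⁻¹ •
        Λ ((∑ i' ∈ Finset.range (ℓ+1), Ev i') / γ)
          ((∑ i' ∈ Finset.range (ℓ+1), Ev i') / γ -
            (∑ i' ∈ Finset.range (ℓ-w), Ev i') / γ))) ℓ ℓ i i)
        = ∑' ℓ : ℕ, Poi (γ*s) ℓ * A ℓ := by
      apply tsum_congr; intro ℓ; rw [hPiR ℓ]
    have e2 : (∑' ℓ : ℕ, Poi (γ*s) ℓ *
        (PiRec (fun ℓ w : ℕ => 1 + γ⁻¹ • Λ (((ℓ:ℝ)+1)/γ) (((w:ℝ)+1)/γ))) ℓ ℓ i i)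
        = ∑' ℓ : ℕ, Poi (γ*s) ℓ * B ℓ := by
      apply tsum_congr; intro ℓ; rw [hPiD ℓ]
    rw [e1, e2, ← Summable.tsum_sub hsumA hsumB]
    apply tsum_congr; intro ℓ; ring
  rw [hre]
  apply aux_tsum_poi_bound (γ*s) hlam M (fun ℓ => A ℓ - B ℓ) _ (by positivity) hABbdd hABsmall
  · have : (fun ℓ : ℕ => Poi (γ*s) ℓ * (A ℓ - B ℓ))
        = fun ℓ => Poi (γ*s) ℓ * A ℓ - Poi (γ*s) ℓ * B ℓ := by
      funext ℓ; ring
    rw [this]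
    exact hsumA.sub hsumB

lemma aux_neg_null {Ω : Type*} [MeasurableSpace Ω] (P : Measure Ω)
    (X : Ω → ℝ) (hX : Measurable X) (hmap : P.map X = expMeasure 1) :
    P {ω | X ω < 0} = 0 := by
  have h1 : {ω | X ω < 0} = X ⁻¹' (Iio 0) := rfl
  rw [h1, ← Measure.map_apply hX measurableSet_Iio, hmap]
  have h2 : expMeasure 1 = volume.withDensity (fun x => exponentialPDF 1 x) := rfl
  have hmeas : Measurable (fun x => exponentialPDF 1 x) :=
    (measurable_exponentialPDFReal 1).ennreal_ofReal
  rw [h2, withDensity_apply _ measurableSet_Iio]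
  exact lintegral_exponentialPDF_of_nonpos le_rfl

lemma aux_bad_null {Ω : Type*} [MeasurableSpace Ω] (P : Measure Ω)
    (E : ℕ → Ω → ℝ) (hEmeas : ∀ i, Measurable (E i))
    (hEexp : ∀ i, P.map (E i) = expMeasure 1) :
    P {ω | ¬ ∀ i : ℕ, 0 ≤ E i ω} = 0 := by
  have h1 : {ω | ¬ ∀ i : ℕ, 0 ≤ E i ω} = ⋃ i : ℕ, {ω | E i ω < 0} := by
    ext ω
    simp only [Set.mem_setOf_eq, Set.mem_iUnion, not_forall, not_le]
  rw [h1]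
  exact measure_iUnion_null fun i => aux_neg_null P (E i) (hEmeas i) (hEexp i)

lemma aux_tendsto_zero (r δ : ℝ) (hδ : 0 < δ) :
    Tendsto (fun γ : ℝ => γ ^ r * Real.exp (-γ ^ δ)) atTop (nhds 0) := by
  have hlog : (fun γ : ℝ => r * Real.log γ) =o[atTop] fun γ : ℝ => γ ^ δ :=
    (isLittleO_log_rpow_atTop hδ).const_mul_left r
  have hev : ∀ᶠ γ : ℝ in atTop, r * Real.log γ - γ ^ δ ≤ -(1/2) * γ ^ δ := by
    filter_upwards [hlog.def (by norm_num : (0:ℝ) < 1/2), eventually_ge_atTop (1:ℝ)] with γ h1 h2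
    rw [Real.norm_eq_abs, Real.norm_eq_abs, abs_of_nonneg
      (Real.rpow_nonneg (by linarith) δ)] at h1
    have := le_abs_self (r * Real.log γ)
    linarith
  have hbot : Tendsto (fun γ : ℝ => r * Real.log γ - γ ^ δ) atTop atBot := by
    apply tendsto_atBot_mono' atTop hev
    have h2 : Tendsto (fun γ : ℝ => (1/2) * γ ^ δ) atTop atTop :=
      (tendsto_rpow_atTop hδ).const_mul_atTop (by norm_num)
    exact tendsto_neg_atBot_iff.mpr (by simpa [neg_mul] using h2) |>.congr
      (fun γ => by ring)
  have hexp : Tendsto (fun γ : ℝ => Real.exp (r * Real.log γ - γ ^ δ)) atTop (nhds 0) :=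
    Real.tendsto_exp_atBot.comp hbot
  apply hexp.congr'
  filter_upwards [eventually_gt_atTop (0:ℝ)] with γ hγ
  rw [Real.rpow_def_of_pos hγ r, ← Real.exp_add]
  congr 1
  ring

end AuxLemmas

open MeasureTheory ProbabilityTheory Filter Asymptotics

set_option maxHeartbeats 2000000 in
theorem atomic_transition_probabilities_littleO
    {Ω : Type*} [MeasurableSpace Ω] (P : Measure Ω) [IsProbabilityMeasure P]
    {J : Type*} [Fintype J] [DecidableEq J] [Nonempty J]
    (Λ : ℝ → ℝ → Matrix J J ℝ) (K : ℝ) (hK : 0 ≤ K)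
    (hLip : ∀ s₁ s₂ v₁ v₂ : ℝ, 0 ≤ s₁ → 0 ≤ s₂ → 0 ≤ v₁ → 0 ≤ v₂ →
      ∀ i : J, ∑ j, |Λ s₁ v₁ i j - Λ s₂ v₂ i j| ≤ K * (|s₁ - s₂| + |v₁ - v₂|))
    -- each Λ(s,v) is an intensity matrix, with diagonal entries bounded by γ₀
    (γ₀ : ℝ) (hγ₀ : 0 < γ₀)
    (hoffdiag : ∀ s v : ℝ, 0 ≤ s → 0 ≤ v → ∀ i j : J, i ≠ j → 0 ≤ Λ s v i j)
    (hrowzero : ∀ s v : ℝ, 0 ≤ s → 0 ≤ v → ∀ i : J, ∑ j, Λ s v i j = 0)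
    (hdiagbdd : ∀ s v : ℝ, 0 ≤ s → 0 ≤ v → ∀ i : J, |Λ s v i i| ≤ γ₀)
    -- (E_i) is an i.i.d. sequence of rate-one exponential random variables
    (E : ℕ → Ω → ℝ) (hEmeas : ∀ i, Measurable (E i))
    (hEindep : iIndepFun E P)
    (hEexp : ∀ i, P.map (E i) = expMeasure 1)
    (q ε : ℝ) (hq : 1 < q) (hε : 0 < ε) :
    ∃ α : ℝ, 0 < α ∧ ∀ s : ℝ, 0 ≤ s →
      (fun γ : ℝ =>
        (P {ω |
          (s + 1) * α * Real.log γ * γ ^ (-(1:ℝ)/2 + ε/2) ≤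
            Finset.univ.sup' Finset.univ_nonempty (fun i : J =>
              ∑ j,
                |pAtom γ (PiRec
                    -- the random matrices Q^{(γ)}(ℓ,w), built from the arrival
                    -- times χ^{(γ)}_ℓ = (E_1 + ⋯ + E_ℓ)/γ
                    (fun ℓ w => 1 + γ⁻¹ •
                      Λ ((∑ i' ∈ Finset.range (ℓ+1), E i' ω) / γ)
                        ((∑ i' ∈ Finset.range (ℓ+1), E i' ω) / γ -
                          (∑ i' ∈ Finset.range (ℓ-w), E i' ω) / γ))) s i j -
                  pAtom γ (PiRec
                    -- the deterministic matrices Q̃^{(γ)}(ℓ,w)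
                    (fun ℓ w => 1 + γ⁻¹ • Λ (((ℓ:ℝ)+1)/γ) (((w:ℝ)+1)/γ))) s i j|)
          }).toReal)
      =o[atTop] fun γ : ℝ => γ ^ (-q) := by
  classical
  refine ⟨1, one_pos, ?_⟩
  intro s hs
  set C1 : ℝ := (Real.exp 1 + q + 2) * (s + 1) with hC1def
  have he1 : (1:ℝ) ≤ Real.exp 1 := Real.one_le_exp zero_le_one
  have hC1pos : 0 < C1 := by nlinarith
  rw [Asymptotics.isLittleO_iff]
  intro c hc
  have htz := aux_tendsto_zero (q+1) (ε/4) (by linarith)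
  have htz2 : Filter.Tendsto (fun γ : ℝ =>
      (2*C1*Real.exp (2*C1)) * (γ ^ (q+1) * Real.exp (-γ ^ (ε/4)))) Filter.atTop (nhds 0) := by
    simpa using htz.const_mul (2*C1*Real.exp (2*C1))
  have hev1 := htz2.eventually_lt_const hc
  filter_upwards [hev1, Filter.eventually_ge_atTop γ₀, Filter.eventually_ge_atTop (25:ℝ),
    Filter.eventually_ge_atTop (Real.exp 1), Filter.eventually_ge_atTop (Real.exp (4*K*C1+1))]
    with γ hsmall hγ0 hγ25 hγe hγK
  have hγpos : 0 < γ := lt_of_lt_of_le (by norm_num) hγ25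
  have hγ1 : (1:ℝ) ≤ γ := le_trans (by norm_num) hγ25
  have hlog1 : (1:ℝ) ≤ Real.log γ := by
    have := Real.log_le_log (Real.exp_pos 1) hγe
    rwa [Real.log_exp] at this
  have hlogK : 4*K*C1 + 1 ≤ Real.log γ := by
    have := Real.log_le_log (Real.exp_pos _) hγK
    rwa [Real.log_exp] at this
  set M : ℕ := ⌈(Real.exp 1 - 1) * (γ*s) + (q+2) * Real.log γ⌉₊ with hMdef
  set tt : ℝ := γ ^ ((1:ℝ)/2 + ε/4) with httdef
  set θ : ℝ := γ ^ (-(1:ℝ)/2) with hθdef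
  have httpos : 0 < tt := Real.rpow_pos_of_pos hγpos _
  have hθpos : 0 < θ := Real.rpow_pos_of_pos hγpos _
  have hsqrt5 : (5:ℝ) ≤ γ ^ ((1:ℝ)/2) := by
    have h1 : ((25:ℝ)) ^ ((1:ℝ)/2) ≤ γ ^ ((1:ℝ)/2) :=
      Real.rpow_le_rpow (by norm_num) hγ25 (by norm_num)
    have h2 : ((25:ℝ)) ^ ((1:ℝ)/2) = 5 := by
      rw [show (25:ℝ) = (5:ℝ)^(2:ℕ) by norm_num, ← Real.rpow_natCast (5:ℝ) 2,
        ← Real.rpow_mul (by norm_num : (0:ℝ) ≤ 5)]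
      norm_num
    linarith
  have hθ5 : θ ≤ 1/5 := by
    have hθeq : θ = (γ ^ ((1:ℝ)/2))⁻¹ := by
      rw [hθdef, ← Real.rpow_neg hγpos.le]
      norm_num
    rw [hθeq]
    have h5 := inv_anti₀ (by norm_num : (0:ℝ) < 5) hsqrt5
    have : ((5:ℝ))⁻¹ = 1/5 := by norm_num
    linarith
  have hθsq : θ^2 = γ⁻¹ := by
    rw [hθdef, ← Real.rpow_natCast (γ ^ (-(1:ℝ)/2)) 2, ← Real.rpow_mul hγpos.le]
    norm_num [Real.rpow_neg_one]
  have hθtt : θ * tt = γ ^ (ε/4) := by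
    rw [hθdef, httdef, ← Real.rpow_add hγpos]
    congr 1; ring
  have hM0 : (0:ℝ) ≤ (Real.exp 1 - 1) * (γ*s) + (q+2) * Real.log γ := by
    have h1 : 0 ≤ (Real.exp 1 - 1) * (γ*s) := mul_nonneg (by linarith) (mul_nonneg hγpos.le hs)
    nlinarith
  have hMlow : (Real.exp 1 - 1) * (γ*s) + (q+2) * Real.log γ ≤ (M:ℝ) := Nat.le_ceil _
  have hMup : (M:ℝ) ≤ C1 * γ := by
    have hceil := Nat.ceil_lt_add_one hM0
    have hloggam : Real.log γ ≤ γ := by linarith [Real.log_le_sub_one_of_pos hγpos]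
    have h2 : (M:ℝ) < (Real.exp 1 - 1)*(γ*s) + (q+2)*γ + γ := by
      rw [hMdef]
      nlinarith [hceil]
    have h3 : (Real.exp 1 - 1)*(γ*s) + (q+2)*γ + γ ≤ C1*γ := by
      rw [hC1def]
      nlinarith [mul_nonneg (mul_nonneg hγpos.le hs) (by linarith : (0:ℝ) ≤ q+3),
        mul_nonneg hγpos.le (by linarith : (0:ℝ) ≤ Real.exp 1 - 1)]
    linarith
  -- numeric bound for the deterministic estimate
  have httγ : γ ^ (-(1:ℝ)/2 + ε/4) * γ = tt := by
    have h := Real.rpow_add hγpos (-(1:ℝ)/2 + ε/4) 1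
    rw [Real.rpow_one] at h
    rw [httdef, show (1:ℝ)/2 + ε/4 = (-(1:ℝ)/2 + ε/4) + 1 by ring, h]
  have hu_le : 2*K*(M:ℝ)*tt/γ^2 ≤ 2*K*C1 * γ ^ (-(1:ℝ)/2 + ε/4) := by
    rw [div_le_iff₀ (by positivity : (0:ℝ) < γ^2)]
    calc 2*K*(M:ℝ)*tt ≤ 2*K*(C1*γ)*tt := by
          apply mul_le_mul_of_nonneg_right _ httpos.le
          have h2K : (0:ℝ) ≤ 2*K := by linarith
          nlinarith [hMup]
      _ = 2*K*C1 * γ ^ (-(1:ℝ)/2 + ε/4) * γ^2 := by rw [← httγ]; ring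
  set X : ℝ := Real.log γ * γ ^ (-(1:ℝ)/2 + ε/2) with hXdef
  have hXpos : 0 < X := mul_pos (by linarith) (Real.rpow_pos_of_pos hγpos _)
  have hsplit : γ ^ (-(1:ℝ)/2 + ε/2) = γ ^ (-(1:ℝ)/2 + ε/4) * γ ^ (ε/4) := by
    rw [← Real.rpow_add hγpos]; congr 1; ring
  have hquarter : (1:ℝ) ≤ γ ^ (ε/4) := by
    have h := Real.rpow_le_rpow_of_exponent_le hγ1 (le_of_lt (by linarith : (0:ℝ) < ε/4))
    rwa [Real.rpow_zero] at h
  have hdet_half : 2*K*C1 * γ ^ (-(1:ℝ)/2 + ε/4) < (1/2) * X := by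
    have hkey : 2*K*C1 + 1/2 ≤ (1/2) * (Real.log γ * γ^(ε/4)) := by
      have h1 : 4*K*C1 + 1 ≤ Real.log γ * γ^(ε/4) := by
        calc 4*K*C1+1 ≤ Real.log γ := hlogK
          _ = Real.log γ * 1 := (mul_one _).symm
          _ ≤ Real.log γ * γ^(ε/4) := by
              exact mul_le_mul_of_nonneg_left hquarter (by linarith)
      linarith
    calc 2*K*C1 * γ ^ (-(1:ℝ)/2 + ε/4) < (2*K*C1 + 1/2) * γ ^ (-(1:ℝ)/2 + ε/4) := by
          apply mul_lt_mul_of_pos_right _ (Real.rpow_pos_of_pos hγpos _)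
          linarith
      _ ≤ ((1/2) * (Real.log γ * γ^(ε/4))) * γ ^ (-(1:ℝ)/2 + ε/4) :=
          mul_le_mul_of_nonneg_right hkey (Real.rpow_nonneg hγpos.le _)
      _ = (1/2) * X := by rw [hXdef, hsplit]; ring
  have htail_half : 2 * γ ^ (-(q+2)) ≤ (1/2) * X := by
    have h1 : γ ^ (-(q+2)) = γ^(-(1:ℝ)/2) * γ^(-(q+(3:ℝ)/2)) := by
      rw [← Real.rpow_add hγpos]; congr 1; ring
    have h2 : γ ^ (-(q+(3:ℝ)/2)) ≤ γ⁻¹ := by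
      have h := Real.rpow_le_rpow_of_exponent_le hγ1 (show -(q+(3:ℝ)/2) ≤ (-1:ℝ) by linarith)
      rwa [Real.rpow_neg_one] at h
    have h3 : γ⁻¹ ≤ 1/25 := by
      rw [show (1:ℝ)/25 = (25:ℝ)⁻¹ by norm_num]
      exact inv_anti₀ (by norm_num) hγ25
    have h4 : γ ^ (-(1:ℝ)/2) ≤ γ ^ (-(1:ℝ)/2 + ε/2) :=
      Real.rpow_le_rpow_of_exponent_le hγ1 (by linarith)
    have h5 : (0:ℝ) < γ ^ (-(1:ℝ)/2) := Real.rpow_pos_of_pos hγpos _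
    have h6 : (0:ℝ) < γ ^ (-(1:ℝ)/2 + ε/2) := Real.rpow_pos_of_pos hγpos _
    calc 2 * γ ^ (-(q+2)) = 2 * (γ^(-(1:ℝ)/2) * γ^(-(q+(3:ℝ)/2))) := by rw [h1]
      _ ≤ 2 * (γ^(-(1:ℝ)/2) * (1/25)) := by
          apply mul_le_mul_of_nonneg_left _ (by norm_num)
          exact mul_le_mul_of_nonneg_left (h2.trans h3) h5.le
      _ ≤ (1/2) * (1 * γ^(-(1:ℝ)/2 + ε/2)) := by nlinarith
      _ ≤ (1/2) * X := by
          rw [hXdef]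
          apply mul_le_mul_of_nonneg_left _ (by norm_num)
          exact mul_le_mul_of_nonneg_right hlog1 h6.le
  have htail0 : 2 * Real.exp ((Real.exp 1 - 1) * (γ*s) - M) ≤ 2 * γ ^ (-(q+2)) := by
    have h1 : (Real.exp 1 - 1) * (γ*s) - (M:ℝ) ≤ -((q+2) * Real.log γ) := by linarith
    have h2 : Real.exp (-((q+2) * Real.log γ)) = γ ^ (-(q+2)) := by
      rw [Real.rpow_def_of_pos hγpos]
      congr 1; ring
    calc 2 * Real.exp ((Real.exp 1 - 1) * (γ*s) - M)
        ≤ 2 * Real.exp (-((q+2)*Real.log γ)) := by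
          exact mul_le_mul_of_nonneg_left (Real.exp_le_exp.mpr h1) (by norm_num)
      _ = 2 * γ^(-(q+2)) := by rw [h2]
  have hnum : 2*K*(M:ℝ)*tt/γ^2 + 2 * Real.exp ((Real.exp 1 - 1) * (γ*s) - M)
      < (s+1) * 1 * Real.log γ * γ ^ (-(1:ℝ)/2 + ε/2) := by
    have hX1 : X ≤ (s+1) * 1 * Real.log γ * γ ^ (-(1:ℝ)/2 + ε/2) := by
      have hXs : (s+1) * 1 * Real.log γ * γ ^ (-(1:ℝ)/2 + ε/2) = (s+1) * X := by
        rw [hXdef]; ring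
      rw [hXs]
      nlinarith [mul_nonneg hs hXpos.le]
    linarith
  -- measure-theoretic part
  set Am : ℕ → Set Ω := fun m => {ω | tt ≤ |(∑ i ∈ Finset.range m, E i ω) - (m:ℝ)|} with hAmdef
  set badE : Set Ω := {ω | ¬ ∀ i : ℕ, 0 ≤ E i ω} with hbaddef
  set Sev : Set Ω := {ω |
          (s + 1) * 1 * Real.log γ * γ ^ (-(1:ℝ)/2 + ε/2) ≤
            Finset.univ.sup' Finset.univ_nonempty (fun i : J =>
              ∑ j,
                |pAtom γ (PiRec
                    (fun ℓ w => 1 + γ⁻¹ •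
                      Λ ((∑ i' ∈ Finset.range (ℓ+1), E i' ω) / γ)
                        ((∑ i' ∈ Finset.range (ℓ+1), E i' ω) / γ -
                          (∑ i' ∈ Finset.range (ℓ-w), E i' ω) / γ))) s i j -
                  pAtom γ (PiRec
                    (fun ℓ w => 1 + γ⁻¹ • Λ (((ℓ:ℝ)+1)/γ) (((w:ℝ)+1)/γ))) s i j|)
          } with hSevdef
  have hincl : Sev ⊆ badE ∪ ⋃ m ∈ Finset.Icc 1 M, Am m := by
    intro ω hω
    by_contra hωn
    simp only [Set.mem_union, Set.mem_iUnion, Set.mem_setOf_eq, not_or, not_exists,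
      not_le, not_not, hbaddef, hAmdef] at hωn
    obtain ⟨hEvnn, hm⟩ := hωn
    have hgood : ∀ m : ℕ, 1 ≤ m → m ≤ M →
        |(∑ i ∈ Finset.range m, E i ω) - (m:ℝ)| < tt := by
      intro m h1 h2
      exact hm m (Finset.mem_Icc.mpr ⟨h1, h2⟩)
    have hcore : ∀ i : J,
        (∑ j, |pAtom γ (PiRec
            (fun ℓ w => 1 + γ⁻¹ •
              Λ ((∑ i' ∈ Finset.range (ℓ+1), E i' ω) / γ)
                ((∑ i' ∈ Finset.range (ℓ+1), E i' ω) / γ -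
                  (∑ i' ∈ Finset.range (ℓ-w), E i' ω) / γ))) s i j -
          pAtom γ (PiRec
            (fun ℓ w => 1 + γ⁻¹ • Λ (((ℓ:ℝ)+1)/γ) (((w:ℝ)+1)/γ))) s i j|)
        < (s+1) * 1 * Real.log γ * γ ^ (-(1:ℝ)/2 + ε/2) := by
      intro i
      have hsumj : (∑ j, |pAtom γ (PiRec
            (fun ℓ w => 1 + γ⁻¹ •
              Λ ((∑ i' ∈ Finset.range (ℓ+1), E i' ω) / γ)
                ((∑ i' ∈ Finset.range (ℓ+1), E i' ω) / γ -
                  (∑ i' ∈ Finset.range (ℓ-w), E i' ω) / γ))) s i j -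
          pAtom γ (PiRec
            (fun ℓ w => 1 + γ⁻¹ • Λ (((ℓ:ℝ)+1)/γ) (((w:ℝ)+1)/γ))) s i j|)
          = |pAtom γ (PiRec
            (fun ℓ w => 1 + γ⁻¹ •
              Λ ((∑ i' ∈ Finset.range (ℓ+1), E i' ω) / γ)
                ((∑ i' ∈ Finset.range (ℓ+1), E i' ω) / γ -
                  (∑ i' ∈ Finset.range (ℓ-w), E i' ω) / γ))) s i i -
          pAtom γ (PiRec
            (fun ℓ w => 1 + γ⁻¹ • Λ (((ℓ:ℝ)+1)/γ) (((w:ℝ)+1)/γ))) s i i| := by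
        rw [Finset.sum_eq_single i]
        · intro j _ hji
          unfold pAtom
          rw [if_neg (Ne.symm hji)]
          simp
        · intro hni; exact absurd (Finset.mem_univ i) hni
      rw [hsumj]
      have hcb := aux_core Λ K hK hLip γ₀ hγ₀ hoffdiag hrowzero hdiagbdd γ s hγ0 hs
        M tt httpos.le (fun n => E n ω) hEvnn hgood i
      exact lt_of_le_of_lt hcb hnum
    have hsup : (Finset.univ.sup' Finset.univ_nonempty (fun i : J =>
        ∑ j, |pAtom γ (PiRec
            (fun ℓ w => 1 + γ⁻¹ •
              Λ ((∑ i' ∈ Finset.range (ℓ+1), E i' ω) / γ)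
                ((∑ i' ∈ Finset.range (ℓ+1), E i' ω) / γ -
                  (∑ i' ∈ Finset.range (ℓ-w), E i' ω) / γ))) s i j -
          pAtom γ (PiRec
            (fun ℓ w => 1 + γ⁻¹ • Λ (((ℓ:ℝ)+1)/γ) (((w:ℝ)+1)/γ))) s i j|))
        < (s+1) * 1 * Real.log γ * γ ^ (-(1:ℝ)/2 + ε/2) :=
      (Finset.sup'_lt_iff Finset.univ_nonempty).mpr fun i _ => hcore i
    rw [hSevdef, Set.mem_setOf_eq] at hω
    linarith
  have hbadnull : P badE = 0 := aux_bad_null P E hEmeas hEexp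
  have hPev : P Sev ≤ ∑ m ∈ Finset.Icc 1 M, P (Am m) := by
    calc P Sev ≤ P (badE ∪ ⋃ m ∈ Finset.Icc 1 M, Am m) := measure_mono hincl
      _ ≤ P badE + P (⋃ m ∈ Finset.Icc 1 M, Am m) := measure_union_le _ _
      _ = P (⋃ m ∈ Finset.Icc 1 M, Am m) := by rw [hbadnull, zero_add]
      _ ≤ ∑ m ∈ Finset.Icc 1 M, P (Am m) := measure_biUnion_finset_le _ _
  have hfinm : ∀ m ∈ Finset.Icc 1 M, P (Am m) ≠ ⊤ := fun m _ => measure_ne_top P _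
  have htR : (P Sev).toReal ≤ ∑ m ∈ Finset.Icc 1 M, (P (Am m)).toReal := by
    have hne : (∑ m ∈ Finset.Icc 1 M, P (Am m)) ≠ ⊤ := by
      rw [← lt_top_iff_ne_top]
      exact ENNReal.sum_lt_top.mpr fun m hm => lt_top_iff_ne_top.mpr (hfinm m hm)
    have h := ENNReal.toReal_mono hne hPev
    rwa [ENNReal.toReal_sum hfinm] at h
  have hterm : ∀ m ∈ Finset.Icc 1 M, (P (Am m)).toReal
      ≤ 2 * Real.exp (2*C1 - γ^(ε/4)) := by
    intro m hm
    have h1 := aux_chernoff P E hEmeas hEindep hEexp m θ tt hθpos hθ5 httpos.le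
    refine le_trans h1 ?_
    apply mul_le_mul_of_nonneg_left _ (by norm_num)
    apply Real.exp_le_exp.mpr
    have hmM : (m:ℝ) ≤ (M:ℝ) := by exact_mod_cast (Finset.mem_Icc.mp hm).2
    have hsqm : 2*θ^2*(m:ℝ) ≤ 2*C1 := by
      rw [hθsq]
      have hγinv : γ⁻¹ * (m:ℝ) ≤ γ⁻¹ * (C1*γ) :=
        mul_le_mul_of_nonneg_left (hmM.trans hMup) (inv_nonneg.mpr hγpos.le)
      have hcancel : γ⁻¹ * (C1 * γ) = C1 := by field_simp
      rw [hcancel] at hγinv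
      linarith
    rw [hθtt] at *
    linarith [hsqm]
  have hcard : (Finset.Icc 1 M).card = M := by
    rw [Nat.card_Icc]
    omega
  have hsumbound : (∑ m ∈ Finset.Icc 1 M, (P (Am m)).toReal)
      ≤ (M:ℝ) * (2 * Real.exp (2*C1 - γ^(ε/4))) := by
    calc (∑ m ∈ Finset.Icc 1 M, (P (Am m)).toReal)
        ≤ ∑ m ∈ Finset.Icc 1 M, 2 * Real.exp (2*C1 - γ^(ε/4)) := Finset.sum_le_sum hterm
      _ = (M:ℝ) * (2 * Real.exp (2*C1 - γ^(ε/4))) := by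
          rw [Finset.sum_const, hcard, nsmul_eq_mul]
  have hfinal : (P Sev).toReal ≤ (2*C1*Real.exp (2*C1)) * (γ * Real.exp (-γ^(ε/4))) := by
    refine htR.trans (hsumbound.trans ?_)
    have hexp2 : Real.exp (2*C1 - γ^(ε/4)) = Real.exp (2*C1) * Real.exp (-γ^(ε/4)) := by
      rw [← Real.exp_add, sub_eq_add_neg]
    calc (M:ℝ) * (2*Real.exp (2*C1 - γ^(ε/4)))
        ≤ (C1*γ) * (2*Real.exp (2*C1 - γ^(ε/4))) :=
          mul_le_mul_of_nonneg_right hMup (by positivity)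
      _ = (2*C1*Real.exp (2*C1)) * (γ * Real.exp (-γ^(ε/4))) := by rw [hexp2]; ring
  rw [Real.norm_eq_abs, abs_of_nonneg ENNReal.toReal_nonneg, Real.norm_eq_abs,
    abs_of_nonneg (Real.rpow_nonneg hγpos.le _)]
  have hγq : γ ^ (q+1) * γ ^ (-q) = γ := by
    rw [← Real.rpow_add hγpos, show q+1+(-q) = (1:ℝ) by ring, Real.rpow_one]
  have hmulq := mul_le_mul_of_nonneg_right hsmall.le (Real.rpow_nonneg hγpos.le (-q))
  calc (P Sev).toReal ≤ (2*C1*Real.exp (2*C1)) * (γ * Real.exp (-γ^(ε/4))) := hfinal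
    _ = (2*C1*Real.exp (2*C1)) * (γ^(q+1) * Real.exp (-γ^(ε/4))) * γ^(-q) := by
        rw [show (2*C1*Real.exp (2*C1)) * (γ^(q+1) * Real.exp (-γ^(ε/4))) * γ^(-q)
            = (2*C1*Real.exp (2*C1)) * ((γ^(q+1) * γ^(-q)) * Real.exp (-γ^(ε/4))) by ring, hγq]
    _ ≤ c * γ^(-q) := hmulq


end
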